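/- If 2G - 2 + N > 0 and (V, E, g, n) is a stable graph of type (G, N), then the number of vertices |V| is at most 2G - 2 + N. In particular, for fixed G and N there are only finitely many isomorphism classes of stable graphs of type (G, N). -/

import Mathlib

open Finset

/-- Number of edges of a multigraph on `Fin K` with multiplicity matrix `a`
(loops counted once). -/
def edgeCount {K : ℕ} (a : Fin K → Fin K → ℕ) : ℕ :=
  (∑ v, a v v) + ∑ i, ∑ j, if i < j then a i j else 0

/-- Degree of a vertex: loops count twice. -/
def degree {K : ℕ} (a : Fin K → Fin K → ℕ) (v : Fin K) : ℕ :=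
  2 * a v v + ∑ w ∈ Finset.univ.filter (fun w => w ≠ v), a v w

/-- A stable graph of type `(G, N)` on `K` vertices: a connected colored
multigraph with genus condition, marked-point condition, and stability. -/
structure StableGraph (G N K : ℕ) where
  a : Fin K → Fin K → ℕ
  g : Fin K → ℕ
  n : Fin K → ℕ
  symm : ∀ i j, a i j = a j i
  conn : (SimpleGraph.fromRel (fun i j : Fin K => 0 < a i j)).Connected
  genus : (∑ v, g v) + edgeCount a = G + (K - 1)
  marks : (∑ v, n v) = N
  stable : ∀ v, g v = 0 → 3 ≤ degree a v + n v

lemma sum_degree_aux {K : ℕ} (a : Fin K → Fin K → ℕ) (hs : ∀ i j, a i j = a j i) :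
    ∑ v, degree a v = 2 * edgeCount a := by
  unfold degree edgeCount
  rw [Finset.sum_add_distrib]
  have h1 : ∀ v : Fin K, ∑ w ∈ Finset.univ.filter (fun w => w ≠ v), a v w
      = (∑ w, if v < w then a v w else 0) + (∑ w, if w < v then a v w else 0) := by
    intro v
    rw [Finset.sum_filter, ← Finset.sum_add_distrib]
    apply Finset.sum_congr rfl
    intro w _
    by_cases hvw : v = w
    · subst hvw; simp
    · rcases lt_or_gt_of_ne hvw with hlt | hgt
      · rw [if_pos (Ne.symm hvw), if_pos hlt, if_neg (not_lt.mpr hlt.le), add_zero]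
      · rw [if_pos (Ne.symm hvw), if_neg (not_lt.mpr hgt.le), if_pos hgt, zero_add]
  have h2 : ∑ v, ∑ w ∈ Finset.univ.filter (fun w => w ≠ v), a v w
      = (∑ i, ∑ j, if i < j then a i j else 0) + (∑ i, ∑ j, if i < j then a i j else 0) := by
    rw [Finset.sum_congr rfl (fun v _ => h1 v), Finset.sum_add_distrib]
    congr 1
    rw [Finset.sum_comm]
    apply Finset.sum_congr rfl
    intro i _
    apply Finset.sum_congr rfl
    intro j _
    rw [hs j i]
  rw [h2, ← Finset.mul_sum]
  ring

lemma a_le_edgeCount {K : ℕ} (a : Fin K → Fin K → ℕ) (hs : ∀ i j, a i j = a j i)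
    (i j : Fin K) : a i j ≤ edgeCount a := by
  have key : ∀ p q : Fin K, p < q → a p q ≤ edgeCount a := by
    intro p q hpq
    have h1 : a p q ≤ ∑ j', if p < j' then a p j' else 0 := by
      have := Finset.single_le_sum (f := fun j' => if p < j' then a p j' else 0)
        (fun x _ => Nat.zero_le _) (Finset.mem_univ q)
      simpa [hpq] using this
    have h2 : (∑ j', if p < j' then a p j' else 0)
        ≤ ∑ i', ∑ j', if i' < j' then a i' j' else 0 :=
      Finset.single_le_sum (f := fun i' => ∑ j', if i' < j' then a i' j' else 0)
        (fun x _ => Nat.zero_le _) (Finset.mem_univ p)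
    exact le_trans (le_trans h1 h2) (Nat.le_add_left _ _)
  rcases lt_trichotomy i j with hij | hij | hij
  · exact key i j hij
  · subst hij
    exact le_trans (Finset.single_le_sum (f := fun v => a v v)
      (fun x _ => Nat.zero_le _) (Finset.mem_univ i)) (Nat.le_add_right _ _)
  · rw [hs]; exact key j i hij

lemma one_le_degree {G N K : ℕ} (S : StableGraph G N K) (hK : 2 ≤ K) (v : Fin K) :
    1 ≤ degree S.a v := by
  haveI : Nontrivial (Fin K) := Fin.nontrivial_iff_two_le.mpr hK
  obtain ⟨w, hw⟩ := exists_ne v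
  obtain ⟨p⟩ := S.conn.preconnected v w
  cases p with
  | nil => exact absurd rfl hw
  | cons hadj p' =>
    rename_i u
    rw [SimpleGraph.fromRel_adj] at hadj
    obtain ⟨hne, hpos⟩ := hadj
    have hpos' : 0 < S.a v u := by
      rcases hpos with hp | hp
      · exact hp
      · rw [S.symm]; exact hp
    have hmem : u ∈ Finset.univ.filter (fun w => w ≠ v) := by
      simp [Ne.symm hne]
    have hle := Finset.single_le_sum (f := fun w => S.a v w) (fun x _ => Nat.zero_le _) hmem
    unfold degree
    calc 1 ≤ S.a v u := hpos'
      _ ≤ ∑ w ∈ Finset.univ.filter (fun w => w ≠ v), S.a v w := hle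
      _ ≤ 2 * S.a v v + ∑ w ∈ Finset.univ.filter (fun w => w ≠ v), S.a v w :=
          Nat.le_add_left _ _

lemma natBound {G N : ℕ} (h : 2 < 2 * G + N) {K : ℕ} (S : StableGraph G N K) :
    K ≤ 2 * G + N - 2 := by
  have hK1 : 1 ≤ K := by
    obtain ⟨v⟩ := S.conn.nonempty
    exact v.pos
  rcases eq_or_lt_of_le hK1 with hK | hK
  · omega
  · have key : ∀ v, 3 ≤ 2 * S.g v + degree S.a v + S.n v := by
      intro v
      rcases Nat.eq_zero_or_pos (S.g v) with hg | hg
      · have := S.stable v hg; omega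
      · have := one_le_degree S hK v; omega
    have hsum : 3 * K ≤ ∑ v, (2 * S.g v + degree S.a v + S.n v) := by
      calc 3 * K = ∑ _v : Fin K, 3 := by simp [mul_comm]
        _ ≤ _ := Finset.sum_le_sum (fun v _ => key v)
    rw [Finset.sum_add_distrib, Finset.sum_add_distrib, ← Finset.mul_sum,
      sum_degree_aux S.a S.symm, S.marks] at hsum
    have hgen := S.genus
    set s := ∑ v, S.g v with hs
    set e := edgeCount S.a with he
    omega

lemma sg_ext {G N K : ℕ} {S T : StableGraph G N K}
    (ha : S.a = T.a) (hg : S.g = T.g) (hn : S.n = T.n) : S = T := by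
  cases S; cases T
  dsimp at ha hg hn
  subst ha; subst hg; subst hn
  rfl

lemma finiteSG (G N K : ℕ) : Finite (StableGraph G N K) := by
  set B := G + K + N + 1 with hB
  have bound : ∀ (S : StableGraph G N K) (i j : Fin K),
      S.a i j < B ∧ S.g i < B ∧ S.n i < B := by
    intro S i j
    have hgen := S.genus
    have h1 : S.a i j ≤ edgeCount S.a := a_le_edgeCount S.a S.symm i j
    have h2 : S.g i ≤ ∑ v, S.g v :=
      Finset.single_le_sum (f := fun v => S.g v) (fun x _ => Nat.zero_le _) (Finset.mem_univ i)
    have h3 : S.n i ≤ N := by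
      calc S.n i ≤ ∑ v, S.n v :=
            Finset.single_le_sum (f := fun v => S.n v) (fun x _ => Nat.zero_le _)
              (Finset.mem_univ i)
        _ = N := S.marks
    set s := ∑ v, S.g v
    set e := edgeCount S.a
    omega
  apply Finite.of_injective (β := (Fin K → Fin K → Fin B) × (Fin K → Fin B) × (Fin K → Fin B))
    (fun S => (fun i j => ⟨S.a i j, (bound S i j).1⟩,
               fun v => ⟨S.g v, (bound S v v).2.1⟩,
               fun v => ⟨S.n v, (bound S v v).2.2⟩))
  intro S T hST
  simp only [Prod.mk.injEq, funext_iff, Fin.mk.injEq] at hST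
  exact sg_ext (funext fun i => funext fun j => hST.1 i j) (funext hST.2.1) (funext hST.2.2)

/-- If `2G - 2 + N > 0`, every stable graph of type `(G, N)` has at most
`2G - 2 + N` vertices; in particular there are only finitely many stable
graphs (hence finitely many isomorphism classes) of type `(G, N)`. -/
theorem stmt5 (G N : ℕ) (h : 2 < 2 * G + N) :
    (∀ K : ℕ, StableGraph G N K → (K : ℤ) ≤ 2 * G - 2 + N) ∧
    Finite ((K : ℕ) × StableGraph G N K) := by
  constructor
  · intro K S
    have hb := natBound h S
    omega
  · haveI : ∀ k : ℕ, Finite (StableGraph G N k) := fun k => finiteSG G N k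
    set M := 2 * G + N - 2 with hM
    haveI : Finite (Σ k : Fin (M + 1), StableGraph G N (k : ℕ)) := by infer_instance
    apply Finite.of_injective
      (β := Σ k : Fin (M + 1), StableGraph G N (k : ℕ))
      (fun x => ⟨⟨x.1, Nat.lt_succ_of_le (natBound h x.2)⟩, x.2⟩)
    intro x y hxy
    obtain ⟨h1, h2⟩ := Sigma.ext_iff.mp hxy
    exact Sigma.ext_iff.mpr ⟨congrArg Fin.val h1, h2⟩
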